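/- Let $B$ be the Ferrers board with column heights $0 \le c_1 \le c_2 \le \cdots \le c_n \le n$, and for $0 \le k \le n$ let $r_k(B)$ denote the number of placements of $k$ nonattacking rooks on $B$ (i.e., $k$-subsets of cells of $B$ with pairwise distinct row and column coordinates). Then for every real number $\alpha$, $\prod_{i=1}^n (\alpha + c_i - (i-1)) = \sum_{k=0}^n r_{n-k}(B) \cdot \alpha(\alpha-1)\cdots(\alpha-k+1)$. -/

import Mathlib

open scoped Classical

/-- The number of placements of `k` nonattacking rooks on the Ferrers board with
column heights `c i` (column `i`, rows `0, …, c i - 1`). -/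
noncomputable def rookNum (n : ℕ) (c : Fin n → ℕ) (k : ℕ) : ℕ :=
  ((Finset.univ : Finset (Fin n × Fin n)).powersetCard k |>.filter
    (fun P => (∀ p ∈ P, (p.2 : ℕ) < c p.1) ∧
      ∀ p ∈ P, ∀ q ∈ P, p ≠ q → p.1 ≠ q.1 ∧ p.2 ≠ q.2)).card

noncomputable def ferrersBoard (n : ℕ) (c : ℕ → ℕ) : Finset (ℕ × ℕ) :=
  (Finset.range n).biUnion (fun i => {i} ×ˢ Finset.range (c i))

lemma mem_ferrersBoard {n : ℕ} {c : ℕ → ℕ} {p : ℕ × ℕ} :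
    p ∈ ferrersBoard n c ↔ p.1 < n ∧ p.2 < c p.1 := by
  simp [ferrersBoard, Finset.mem_biUnion, Finset.mem_product]
  constructor
  · rintro ⟨i, hi, r, hr, rfl⟩; exact ⟨hi, hr⟩
  · rintro ⟨h1, h2⟩; exact ⟨p.1, h1, p.2, h2, rfl⟩

noncomputable def placements (n : ℕ) (c : ℕ → ℕ) (k : ℕ) : Finset (Finset (ℕ × ℕ)) :=
  ((ferrersBoard n c).powersetCard k).filter
    (fun P => ∀ p ∈ P, ∀ q ∈ P, p ≠ q → p.1 ≠ q.1 ∧ p.2 ≠ q.2)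

lemma mem_placements {n : ℕ} {c : ℕ → ℕ} {k : ℕ} {P : Finset (ℕ × ℕ)} :
    P ∈ placements n c k ↔
      P.card = k ∧ (∀ p ∈ P, p.1 < n ∧ p.2 < c p.1) ∧
        (∀ p ∈ P, ∀ q ∈ P, p ≠ q → p.1 ≠ q.1 ∧ p.2 ≠ q.2) := by
  simp only [placements, Finset.mem_filter, Finset.mem_powersetCard]
  constructor
  · rintro ⟨⟨hsub, hcard⟩, hd⟩
    exact ⟨hcard, fun p hp => mem_ferrersBoard.1 (hsub hp), hd⟩
  · rintro ⟨hcard, hb, hd⟩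
    exact ⟨⟨fun p hp => mem_ferrersBoard.2 (hb p hp), hcard⟩, hd⟩

lemma placements_zero (n : ℕ) (c : ℕ → ℕ) : placements n c 0 = {∅} := by
  ext P
  simp only [mem_placements, Finset.card_eq_zero, Finset.mem_singleton]
  constructor
  · rintro ⟨h, -, -⟩; exact h
  · rintro rfl; simp

lemma rows_card {n c k} {P : Finset (ℕ × ℕ)} (hP : P ∈ placements n c k) :
    (P.image Prod.snd).card = k := by
  rw [mem_placements] at hP
  rw [Finset.card_image_of_injOn, hP.1]
  intro p hp q hq hpq
  by_contra h
  exact (hP.2.2 p hp q hq h).2 hpq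

lemma cols_card {n c k} {P : Finset (ℕ × ℕ)} (hP : P ∈ placements n c k) :
    (P.image Prod.fst).card = k := by
  rw [mem_placements] at hP
  rw [Finset.card_image_of_injOn, hP.1]
  intro p hp q hq hpq
  by_contra h
  exact (hP.2.2 p hp q hq h).1 hpq

lemma placements_card_zero_of_lt {n k : ℕ} {c : ℕ → ℕ} (hmono : Monotone c)
    (h : c n < k) : (placements n c k).card = 0 := by
  rw [Finset.card_eq_zero]
  by_contra hne
  obtain ⟨P, hP⟩ := Finset.nonempty_iff_ne_empty.2 hne
  have hk : k ≤ c n := by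
    have := rows_card hP
    rw [← this]
    have : P.image Prod.snd ⊆ Finset.range (c n) := by
      intro r hr
      simp only [Finset.mem_image] at hr
      obtain ⟨p, hp, rfl⟩ := hr
      have h1 := (mem_placements.1 hP).2.1 p hp
      exact Finset.mem_range.2 (lt_of_lt_of_le h1.2 (hmono h1.1.le))
    exact le_trans (Finset.card_le_card this) (by simp)
  omega

lemma placements_card_zero_of_lt' {n k : ℕ} {c : ℕ → ℕ}
    (h : n < k) : (placements n c k).card = 0 := by
  rw [Finset.card_eq_zero]
  by_contra hne
  obtain ⟨P, hP⟩ := Finset.nonempty_iff_ne_empty.2 hne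
  have hk : k ≤ n := by
    have := cols_card hP
    rw [← this]
    have : P.image Prod.fst ⊆ Finset.range n := by
      intro r hr
      simp only [Finset.mem_image] at hr
      obtain ⟨p, hp, rfl⟩ := hr
      exact Finset.mem_range.2 ((mem_placements.1 hP).2.1 p hp).1
    exact le_trans (Finset.card_le_card this) (by simp)
  omega

lemma filter_col_ne {n : ℕ} {Q : Finset (ℕ × ℕ)} (hQ : ∀ q ∈ Q, q.1 < n) (r : ℕ) :
    (insert (n, r) Q).filter (fun p => p.1 ≠ n) = Q := by
  rw [Finset.filter_insert, if_neg (by simp)]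
  exact Finset.filter_true_of_mem (fun q hq => by have := hQ q hq; omega)

lemma placements_succ_card (n k : ℕ) (c : ℕ → ℕ) (hmono : Monotone c) :
    (placements (n+1) c (k+1)).card =
      (placements n c (k+1)).card + (c n - k) * (placements n c k).card := by
  classical
  have hsplit := Finset.card_filter_add_card_filter_not
    (s := placements (n+1) c (k+1)) (p := fun P => ∀ p ∈ P, p.1 ≠ n)
  have hA : (placements (n+1) c (k+1)).filter (fun P => ∀ p ∈ P, p.1 ≠ n)
      = placements n c (k+1) := by
    ext P
    simp only [Finset.mem_filter, mem_placements]
    constructor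
    · rintro ⟨⟨h1, h2, h3⟩, h4⟩
      refine ⟨h1, fun p hp => ⟨?_, (h2 p hp).2⟩, h3⟩
      have := (h2 p hp).1; have := h4 p hp; omega
    · rintro ⟨h1, h2, h3⟩
      exact ⟨⟨h1, fun p hp => ⟨Nat.lt_succ_of_lt (h2 p hp).1, (h2 p hp).2⟩, h3⟩,
        fun p hp => Nat.ne_of_lt (h2 p hp).1⟩
  have hB : (placements (n+1) c (k+1)).filter (fun P => ¬ ∀ p ∈ P, p.1 ≠ n)
      = (placements n c k).biUnion
        (fun Q => ((Finset.range (c n)) \ Q.image Prod.snd).image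
          (fun r => insert (n, r) Q)) := by
    ext P
    simp only [Finset.mem_filter, Finset.mem_biUnion, Finset.mem_image,
      Finset.mem_sdiff, Finset.mem_range]
    constructor
    · rintro ⟨hP, hcol⟩
      push_neg at hcol
      obtain ⟨⟨a, r⟩, hp, hpn⟩ := hcol
      simp only [ne_eq, not_not] at hpn
      subst hpn
      obtain ⟨h1, h2, h3⟩ := mem_placements.1 hP
      have hQcols : ∀ q ∈ P.erase (a, r), q.1 < a := by
        intro q hq
        have hqP := Finset.mem_of_mem_erase hq
        have hqne := Finset.ne_of_mem_erase hq
        have := (h3 q hqP (a, r) hp hqne).1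
        have := (h2 q hqP).1
        omega
      refine ⟨P.erase (a, r), mem_placements.2 ⟨?_, ?_, ?_⟩, r, ⟨?_, ?_⟩, ?_⟩
      · rw [Finset.card_erase_of_mem hp, h1]; omega
      · exact fun q hq => ⟨hQcols q hq, (h2 q (Finset.mem_of_mem_erase hq)).2⟩
      · exact fun p hp' q hq' hne => h3 p (Finset.mem_of_mem_erase hp')
          q (Finset.mem_of_mem_erase hq') hne
      · exact (h2 (a, r) hp).2
      · rintro ⟨q, hq, hq2⟩
        exact (h3 q (Finset.mem_of_mem_erase hq) (a, r) hp
          (Finset.ne_of_mem_erase hq)).2 hq2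
      · exact Finset.insert_erase hp
    · rintro ⟨Q, hQ, r, ⟨hr1, hr2⟩, rfl⟩
      obtain ⟨h1, h2, h3⟩ := mem_placements.1 hQ
      have hnQ : (n, r) ∉ Q := fun h => absurd ((h2 _ h).1) (by simp)
      have hmem : ∀ p ∈ insert (n, r) Q, p = (n, r) ∨ p ∈ Q := by
        intro p hp; exact Finset.mem_insert.1 hp
      refine ⟨mem_placements.2 ⟨?_, ?_, ?_⟩, ?_⟩
      · rw [Finset.card_insert_of_notMem hnQ, h1]
      · intro p hp
        rcases hmem p hp with rfl | hpQ
        · exact ⟨Nat.lt_succ_self n, hr1⟩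
        · exact ⟨Nat.lt_succ_of_lt (h2 p hpQ).1, (h2 p hpQ).2⟩
      · intro p hp q hq hne
        rcases hmem p hp with rfl | hpQ <;> rcases hmem q hq with rfl | hqQ
        · exact absurd rfl hne
        · constructor
          · exact fun e => absurd ((h2 q hqQ).1) (by omega)
          · exact fun e => hr2 ⟨q, hqQ, e.symm⟩
        · constructor
          · exact fun e => absurd ((h2 p hpQ).1) (by omega)
          · exact fun e => hr2 ⟨p, hpQ, e⟩
        · exact h3 p hpQ q hqQ hne
      · push_neg
        exact ⟨(n, r), Finset.mem_insert_self _ _, by simp⟩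
  rw [hA, hB] at hsplit
  rw [← hsplit]
  congr 1
  rw [Finset.card_biUnion]
  · rw [Finset.sum_congr rfl (g := fun _ => c n - k), Finset.sum_const, smul_eq_mul,
      Nat.mul_comm]
    intro Q hQ
    obtain ⟨h1, h2, h3⟩ := mem_placements.1 hQ
    have hrows : Q.image Prod.snd ⊆ Finset.range (c n) := by
      intro r hr
      simp only [Finset.mem_image] at hr
      obtain ⟨q, hq, rfl⟩ := hr
      exact Finset.mem_range.2 (lt_of_lt_of_le (h2 q hq).2 (hmono (h2 q hq).1.le))
    rw [Finset.card_image_of_injOn, Finset.card_sdiff_of_subset hrows, rows_card hQ,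
      Finset.card_range]
    intro r hr r' hr' he
    have he' : insert (n, r) Q = insert (n, r') Q := he
    have h0 : (n, r) ∈ insert (n, r') Q := he' ▸ Finset.mem_insert_self _ _
    rcases Finset.mem_insert.1 h0 with h | h
    · exact (Prod.ext_iff.1 h).2
    · exact absurd ((mem_placements.1 hQ).2.1 _ h).1 (by simp)
  · intro Q hQ Q' hQ' hne
    rw [Function.onFun, Finset.disjoint_left]
    rintro P hP hP'
    simp only [Finset.mem_image, Finset.mem_sdiff, Finset.mem_range] at hP hP'
    obtain ⟨r, -, rfl⟩ := hP
    obtain ⟨r', -, he⟩ := hP'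
    apply hne
    have hQc : ∀ q ∈ Q, q.1 < n := fun q hq => ((mem_placements.1 hQ).2.1 q hq).1
    have hQc' : ∀ q ∈ Q', q.1 < n := fun q hq => ((mem_placements.1 hQ').2.1 q hq).1
    calc Q = (insert (n, r) Q).filter (fun p => p.1 ≠ n) := (filter_col_ne hQc r).symm
    _ = (insert (n, r') Q').filter (fun p => p.1 ≠ n) := by rw [he]
    _ = Q' := filter_col_ne hQc' r'

theorem gjw_nat (n : ℕ) (c : ℕ → ℕ) (hmono : Monotone c) (α : ℝ) :
    (∏ i ∈ Finset.range n, (α + (c i : ℝ) - (i : ℕ))) =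
      ∑ k ∈ Finset.range (n + 1),
        ((placements n c (n - k)).card : ℝ) * ∏ j ∈ Finset.range k, (α - j) := by
  induction n with
  | zero => simp [placements_zero]
  | succ n ih =>
    have hrec : ∀ k : ℕ, ((placements (n+1) c (k+1)).card : ℝ)
        = ((placements n c (k+1)).card : ℝ)
          + ((c n : ℝ) - k) * ((placements n c k).card : ℝ) := by
      intro k
      have h := placements_succ_card n k c hmono
      by_cases hk : k ≤ c n
      · rw [h]; push_cast [Nat.cast_sub hk]; ring
      · push_neg at hk
        rw [h, placements_card_zero_of_lt hmono hk, Nat.sub_eq_zero_of_le hk.le]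
        simp [placements_card_zero_of_lt hmono hk]
    have key : (∑ k ∈ Finset.range (n + 2),
          ((placements (n+1) c (n + 1 - k)).card : ℝ) * ∏ j ∈ Finset.range k, (α - j))
        = (α + (c n : ℝ) - (n : ℕ)) * ∑ k ∈ Finset.range (n + 1),
            ((placements n c (n - k)).card : ℝ) * ∏ j ∈ Finset.range k, (α - j) := by
      rw [Finset.sum_range_succ]
      have e1 : ∀ k ∈ Finset.range (n + 1),
          ((placements (n+1) c (n + 1 - k)).card : ℝ) * ∏ j ∈ Finset.range k, (α - j)
          = ((placements n c (n - k + 1)).card : ℝ) * ∏ j ∈ Finset.range k, (α - j)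
            + (((c n : ℝ) - (n : ℝ) + (k : ℝ)) * ((placements n c (n - k)).card : ℝ))
              * ∏ j ∈ Finset.range k, (α - j) := by
        intro k hk
        rw [Finset.mem_range] at hk
        have h1 : n + 1 - k = (n - k) + 1 := by omega
        rw [h1, hrec (n - k), Nat.cast_sub (by omega : k ≤ n)]
        ring
      rw [Finset.sum_congr rfl e1, Finset.sum_add_distrib]
      have e2 : (∑ k ∈ Finset.range (n + 1),
          ((placements n c (n - k + 1)).card : ℝ) * ∏ j ∈ Finset.range k, (α - j))
          = ∑ k ∈ Finset.range n,
            ((placements n c (n - k)).card : ℝ)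
              * ((∏ j ∈ Finset.range k, (α - j)) * (α - k)) := by
        rw [Finset.sum_range_succ']
        have hz : (placements n c (n - 0 + 1)).card = 0 :=
          placements_card_zero_of_lt' (by omega)
        rw [hz, Nat.cast_zero, zero_mul, add_zero]
        refine Finset.sum_congr rfl (fun k hk => ?_)
        rw [Finset.mem_range] at hk
        have h1 : n - (k + 1) + 1 = n - k := by omega
        rw [h1, Finset.prod_range_succ]
      have e3 : n + 1 - (n + 1) = 0 := Nat.sub_self _
      rw [e2, e3, placements_zero]
      simp only [Finset.card_singleton, Nat.cast_one, one_mul]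
      have e4 : (∏ j ∈ Finset.range (n + 1), (α - j))
          = ((placements n c (n - n)).card : ℝ)
            * ((∏ j ∈ Finset.range n, (α - j)) * (α - n)) := by
        rw [Nat.sub_self, placements_zero, Finset.prod_range_succ]
        simp
      rw [e4]
      rw [Finset.sum_range_succ (f := fun k => ((c n : ℝ) - (n : ℝ) + (k : ℝ))
        * ((placements n c (n - k)).card : ℝ) * ∏ j ∈ Finset.range k, (α - (j : ℕ)))]
      conv_rhs => rw [Finset.sum_range_succ]
      have hAB : (∑ k ∈ Finset.range n, ((placements n c (n - k)).card : ℝ)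
            * ((∏ j ∈ Finset.range k, (α - j)) * (α - k)))
          + ∑ k ∈ Finset.range n, ((c n : ℝ) - (n : ℝ) + (k : ℝ))
            * ((placements n c (n - k)).card : ℝ) * ∏ j ∈ Finset.range k, (α - j)
          = (α + (c n : ℝ) - (n : ℝ)) * ∑ k ∈ Finset.range n,
            ((placements n c (n - k)).card : ℝ) * ∏ j ∈ Finset.range k, (α - j) := by
        rw [Finset.mul_sum, ← Finset.sum_add_distrib]
        exact Finset.sum_congr rfl (fun k _ => by ring)
      linear_combination hAB
    rw [Finset.prod_range_succ, ih, key]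
    ring

lemma fprod_inj (n : ℕ) : Function.Injective
    (fun p : Fin n × Fin n => ((p.1 : ℕ), (p.2 : ℕ))) := by
  rintro ⟨a, b⟩ ⟨a', b'⟩ h
  simp only [Prod.mk.injEq] at h
  exact Prod.ext (Fin.val_injective h.1) (Fin.val_injective h.2)

lemma rookNum_eq (n : ℕ) (c : Fin n → ℕ) (k : ℕ) (hle : ∀ i, c i ≤ n) :
    rookNum n c k =
      (placements n (fun i => if h : i < n then c ⟨i, h⟩ else n) k).card := by
  classical
  set cN : ℕ → ℕ := fun i => if h : i < n then c ⟨i, h⟩ else n with hcN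
  have hcNval : ∀ i : Fin n, cN (i : ℕ) = c i := by
    intro i; simp [hcN, i.isLt]
  unfold rookNum
  refine Finset.card_bij
    (fun P _ => P.image (fun p : Fin n × Fin n => ((p.1 : ℕ), (p.2 : ℕ)))) ?_ ?_ ?_
  · intro P hP
    simp only [Finset.mem_filter, Finset.mem_powersetCard, Finset.subset_univ,
      true_and] at hP
    obtain ⟨hcard, hrow, hd⟩ := hP
    refine mem_placements.2 ⟨?_, ?_, ?_⟩
    · rw [Finset.card_image_of_injective _ (fprod_inj n), hcard]
    · intro q hq
      simp only [Finset.mem_image] at hq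
      obtain ⟨p, hp, rfl⟩ := hq
      exact ⟨p.1.isLt, by rw [hcNval p.1]; exact hrow p hp⟩
    · intro q hq q' hq' hne
      simp only [Finset.mem_image] at hq hq'
      obtain ⟨p, hp, rfl⟩ := hq
      obtain ⟨p', hp', rfl⟩ := hq'
      have hpp : p ≠ p' := fun e => hne (by rw [e])
      have := hd p hp p' hp' hpp
      exact ⟨fun e => this.1 (Fin.val_injective e), fun e => this.2 (Fin.val_injective e)⟩
  · intro P hP P' hP' he
    exact Finset.image_injective (fprod_inj n) he
  · intro Q hQ
    obtain ⟨hcard, hb, hd⟩ := mem_placements.1 hQ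
    have hcol : ∀ q : ℕ × ℕ, q ∈ Q → q.1 < n := fun q hq => (hb q hq).1
    have hrow : ∀ q : ℕ × ℕ, q ∈ Q → q.2 < n := by
      intro q hq
      have h2 := (hb q hq).2
      rw [hcN] at h2
      simp only [dif_pos (hcol q hq)] at h2
      exact lt_of_lt_of_le h2 (hle _)
    refine ⟨Q.attach.image (fun q =>
      ((⟨q.1.1, hcol q.1 q.2⟩ : Fin n), (⟨q.1.2, hrow q.1 q.2⟩ : Fin n))), ?_, ?_⟩
    · simp only [Finset.mem_filter, Finset.mem_powersetCard, Finset.subset_univ,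
        true_and]
      have hinj : ∀ q ∈ Q.attach, ∀ q' ∈ Q.attach,
          ((⟨q.1.1, hcol q.1 q.2⟩ : Fin n), (⟨q.1.2, hrow q.1 q.2⟩ : Fin n))
            = ((⟨q'.1.1, hcol q'.1 q'.2⟩ : Fin n), (⟨q'.1.2, hrow q'.1 q'.2⟩ : Fin n))
          → q = q' := by
        intro q _ q' _ h
        simp only [Prod.mk.injEq, Fin.mk.injEq] at h
        exact Subtype.ext (Prod.ext h.1 h.2)
      refine ⟨?_, ?_, ?_⟩
      · rw [Finset.card_image_of_injOn hinj, Finset.card_attach, hcard]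
      · intro p hp
        simp only [Finset.mem_image] at hp
        obtain ⟨q, hq, rfl⟩ := hp
        have h2 := (hb q.1 q.2).2
        rw [hcN] at h2
        simpa only [dif_pos (hcol q.1 q.2)] using h2
      · intro p hp p' hp' hne
        simp only [Finset.mem_image] at hp hp'
        obtain ⟨q, hq, rfl⟩ := hp
        obtain ⟨q', hq', rfl⟩ := hp'
        have hqq : q.1 ≠ q'.1 := by
          intro e
          exact hne (by
            have : q = q' := Subtype.ext e
            rw [this])
        have := hd q.1 q.2 q'.1 q'.2 hqq
        constructor
        · intro e
          simp only [Fin.mk.injEq] at e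
          exact this.1 e
        · intro e
          simp only [Fin.mk.injEq] at e
          exact this.2 e
    · rw [Finset.image_image]
      have : ((fun p : Fin n × Fin n => ((p.1 : ℕ), (p.2 : ℕ))) ∘ (fun q : {x // x ∈ Q} =>
          ((⟨q.1.1, hcol q.1 q.2⟩ : Fin n), (⟨q.1.2, hrow q.1 q.2⟩ : Fin n))))
          = fun q : {x // x ∈ Q} => q.1 := by
        funext q
        simp
      rw [this, Finset.attach_image_val]

/-- Goldman–Joichi–White factorization theorem. -/
theorem goldman_joichi_white (n : ℕ) (c : Fin n → ℕ) (hmono : Monotone c)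
    (hle : ∀ i, c i ≤ n) (α : ℝ) :
    (∏ i : Fin n, (α + (c i : ℝ) - (i : ℕ))) =
      ∑ k ∈ Finset.range (n + 1),
        (rookNum n c (n - k) : ℝ) * ∏ j ∈ Finset.range k, (α - j) := by
  classical
  set cN : ℕ → ℕ := fun i => if h : i < n then c ⟨i, h⟩ else n with hcN
  have hmonoN : Monotone cN := by
    intro i j hij
    simp only [hcN]
    split_ifs with hi hj hj
    · exact hmono (by exact hij)
    · exact hle _
    · omega
    · exact le_refl n
  have h1 : (∏ i : Fin n, (α + (c i : ℝ) - (i : ℕ)))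
      = ∏ i ∈ Finset.range n, (α + (cN i : ℝ) - (i : ℕ)) := by
    rw [← Fin.prod_univ_eq_prod_range (fun i => α + (cN i : ℝ) - (i : ℕ))]
    refine Finset.prod_congr rfl fun i _ => ?_
    have : cN (i : ℕ) = c i := by simp [hcN, i.isLt]
    rw [this]
  rw [h1, gjw_nat n cN hmonoN α]
  refine Finset.sum_congr rfl fun k _ => ?_
  rw [rookNum_eq n c (n - k) hle]
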